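/- Let L_n^{(β)} be the Laguerre-type polynomials orthogonal on (0,∞) with weight t^{β−1} e^{−t} (β > 0) normalized to have leading coefficient 1/n!. For nonnegative integers x ≠ y and any r > 0, ∫_r^∞ L_x^{(β)}(t) L_y^{(β)}(t) t^{β−1} e^{−t} dt = r^β e^{−r} (L_{x−1}^{(β+1)}(r) L_y^{(β)}(r) − L_x^{(β)}(r) L_{y−1}^{(β+1)}(r)) / (x − y), with the convention L_{−1}^{(β+1)} = 0. -/

import Mathlib

/-- The Laguerre-type polynomials `L_n^{(β)}` (orthogonal on `(0,∞)` with weight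
`t^{β−1}e^{−t}`, leading coefficient `1/n!`), defined via the three-term relation
`t L_x = (x+1)L_{x+1} + (2x+β)L_x + (x+β−1)L_{x−1}`, with `L_0 = 1`, `L_1(t) = t − β`. -/
noncomputable def lagP (β : ℝ) : ℕ → ℝ → ℝ
  | 0, _ => 1
  | 1, t => t - β
  | n + 2, t =>
      ((t - (2 * ((n : ℝ) + 1) + β)) * lagP β (n + 1) t
        - ((n : ℝ) + 1 + β - 1) * lagP β n t) / ((n : ℝ) + 2)

open MeasureTheory Real Set Filter Topology

lemma lagP_zero (β t : ℝ) : lagP β 0 t = 1 := rfl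
lemma lagP_one (β t : ℝ) : lagP β 1 t = t - β := rfl

lemma lagP_rec (β : ℝ) (n : ℕ) (t : ℝ) :
    ((n : ℝ) + 2) * lagP β (n + 2) t
      = (t - (2 * ((n : ℝ) + 1) + β)) * lagP β (n + 1) t - ((n : ℝ) + β) * lagP β n t := by
  have h : ((n : ℝ) + 2) ≠ 0 := by positivity
  show ((n : ℝ) + 2) * (((t - (2 * ((n : ℝ) + 1) + β)) * lagP β (n + 1) t
        - ((n : ℝ) + 1 + β - 1) * lagP β n t) / ((n : ℝ) + 2)) = _
  rw [mul_comm, div_mul_cancel₀ _ h]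
  ring

/-- Contiguous relation A : `L_{n+1}^{(β)} = L_{n+1}^{(β+1)} + L_n^{(β+1)}`. -/
lemma lagA (β : ℝ) (n : ℕ) (t : ℝ) :
    lagP β (n + 1) t = lagP (β + 1) (n + 1) t + lagP (β + 1) n t := by
  induction n using Nat.twoStepInduction with
  | zero => norm_num [lagP_zero, lagP_one]; ring
  | one =>
      have h1 := lagP_rec β 0 t
      have h2 := lagP_rec (β + 1) 0 t
      norm_num [lagP_zero, lagP_one] at h1 h2 ⊢
      linear_combination (h1 - h2) / 2
  | more n ih1 ih2 =>
      have h1 := lagP_rec β (n + 1) t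
      have h2 := lagP_rec (β + 1) (n + 1) t
      have h3 := lagP_rec (β + 1) n t
      simp only [Nat.add_assoc] at h1 h2 h3 ih1 ih2 ⊢
      norm_num at h1 h2 h3 ih1 ih2 ⊢
      push_cast at h1 h2 h3 ih1 ih2 ⊢
      have key : ((n : ℝ) + 3) * lagP β (n + 3) t
          = ((n : ℝ) + 3) * (lagP (β + 1) (n + 3) t + lagP (β + 1) (n + 2) t) := by
        linear_combination h1 - h2 - h3 + (t - (2 * (n : ℝ) + 4 + β)) * ih2
          - ((n : ℝ) + 1 + β) * ih1
      exact mul_left_cancel₀ (by positivity) key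

/-- Contiguous relation B : `t L_n^{(β+1)} = (n+1) L_{n+1}^{(β)} + (n+β) L_n^{(β)}`. -/
lemma lagB (β : ℝ) (n : ℕ) (t : ℝ) :
    t * lagP (β + 1) n t = ((n : ℝ) + 1) * lagP β (n + 1) t + ((n : ℝ) + β) * lagP β n t := by
  induction n using Nat.twoStepInduction with
  | zero => norm_num [lagP_zero, lagP_one]
  | one =>
      have h1 := lagP_rec β 0 t
      norm_num [lagP_zero, lagP_one] at h1 ⊢
      linear_combination -h1
  | more n ih1 ih2 =>
      have h1 := lagP_rec β (n + 1) t
      have h2 := lagP_rec β n t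
      have h3 := lagP_rec (β + 1) n t
      simp only [Nat.add_assoc] at h1 h2 h3 ih1 ih2 ⊢
      norm_num at h1 h2 h3 ih1 ih2 ⊢
      push_cast at h1 h2 h3 ih1 ih2 ⊢
      have key : ((n : ℝ) + 2) * (t * lagP (β + 1) (n + 2) t)
          = ((n : ℝ) + 2) * (((n : ℝ) + 3) * lagP β (n + 3) t
              + ((n : ℝ) + 2 + β) * lagP β (n + 2) t) := by
        linear_combination t * h3 + (t - (2 * (n : ℝ) + 3 + β)) * ih2
          - ((n : ℝ) + 1 + β) * ih1 - ((n : ℝ) + 2) * h1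
          - ((n : ℝ) + 1 + β) * h2
      have := mul_left_cancel₀ (show ((n:ℝ)+2) ≠ 0 by positivity) key
      linarith [this]

/-- Identity used for the derivative recurrence. -/
lemma lagD1 (β : ℝ) (n : ℕ) (t : ℝ) :
    ((n : ℝ) + 2) * lagP (β + 1) (n + 1) t
      = lagP β (n + 1) t + (t - (2 * (n : ℝ) + 2 + β)) * lagP (β + 1) n t
        - ((n : ℝ) + β) * (if n = 0 then 0 else lagP (β + 1) (n - 1) t) := by
  cases n with
  | zero => norm_num [lagP_zero, lagP_one]; ring
  | succ m =>
      have h := lagP_rec (β + 1) m t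
      have a := lagA β (m + 1) t
      simp only [Nat.add_sub_cancel, Nat.succ_ne_zero, if_neg, ite_false]
      simp only [Nat.add_assoc] at h a ⊢
      norm_num at h a ⊢
      push_cast
      linear_combination h - a

/-- Forward-shift identity :
`(n+1) L_{n+1}^{(β)} = (t-β) L_n^{(β+1)} - t L_{n-1}^{(β+2)}`. -/
lemma lagD (β : ℝ) (n : ℕ) (t : ℝ) :
    ((n : ℝ) + 1) * lagP β (n + 1) t
      = (t - β) * lagP (β + 1) n t
        - t * (if n = 0 then 0 else lagP (β + 2) (n - 1) t) := by
  cases n with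
  | zero => norm_num [lagP_zero, lagP_one]
  | succ m =>
      have b1 := lagB β (m + 1) t
      have b2 := lagB (β + 1) m t
      have a1 := lagA β m t
      have e : β + 1 + 1 = β + 2 := by ring
      rw [e] at b2
      simp only [Nat.add_sub_cancel, Nat.succ_ne_zero, if_neg, ite_false]
      simp only [Nat.add_assoc] at b1 b2 a1 ⊢
      norm_num at b1 b2 a1 ⊢
      push_cast
      linear_combination -b1 + b2 - ((m : ℝ) + 1 + β) * a1

/-- The derivative of `lagP β n` is `lagP (β+1) (n-1)` (or `0` for `n = 0`). -/
lemma lagP_hasDerivAt (β : ℝ) (n : ℕ) (t : ℝ) :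
    HasDerivAt (lagP β n) (if n = 0 then 0 else lagP (β + 1) (n - 1) t) t := by
  induction n using Nat.twoStepInduction generalizing t with
  | zero =>
      simp only [if_pos rfl]
      exact hasDerivAt_const t 1
  | one =>
      have hf : lagP β 1 = fun s => s - β := rfl
      simp only [Nat.one_ne_zero, if_neg, ite_false, Nat.sub_self, lagP_zero, hf]
      simpa using (hasDerivAt_id t).sub_const β
  | more n ih1 ih2 =>
      have hf : lagP β (n + 2) = fun s =>
          ((s - (2 * ((n : ℝ) + 1) + β)) * lagP β (n + 1) s
            - ((n : ℝ) + 1 + β - 1) * lagP β n s) / ((n : ℝ) + 2) := rfl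
      have h1 : HasDerivAt (lagP β (n + 1)) (lagP (β + 1) n t) t := by
        simpa using ih2 t
      have h0 := ih1 t
      have hD := ((((hasDerivAt_id t).sub_const (2 * ((n : ℝ) + 1) + β)).mul h1).sub
        ((hasDerivAt_const t ((n : ℝ) + 1 + β - 1)).mul h0)).div_const ((n : ℝ) + 2)
      rw [hf]
      simp only [Nat.succ_ne_zero, if_neg, ite_false]
      rw [show n + 2 - 1 = n + 1 from rfl]
      refine hD.congr_deriv (Eq.symm ?_)
      simp only [id_eq]
      have hne : ((n : ℝ) + 2) ≠ 0 := by positivity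
      rw [eq_div_iff hne]
      linear_combination lagD1 β n t

lemma lagP_continuous (β : ℝ) (n : ℕ) : Continuous (lagP β n) :=
  continuous_iff_continuousAt.2 fun t =>
    (lagP_hasDerivAt β n t).differentiableAt.continuousAt

/-- Polynomial growth bound for `lagP`. -/
lemma lagP_bound (β : ℝ) (n : ℕ) :
    ∃ C : ℝ, 0 < C ∧ ∀ t : ℝ, 1 ≤ t → |lagP β n t| ≤ C * t ^ n := by
  induction n using Nat.twoStepInduction with
  | zero => exact ⟨1, one_pos, fun t ht => by simp [lagP_zero]⟩
  | one =>
      refine ⟨1 + |β|, by positivity, fun t ht => ?_⟩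
      rw [lagP_one, pow_one]
      have h0 : (0:ℝ) < t := lt_of_lt_of_le one_pos ht
      calc |t - β| ≤ |t| + |β| := abs_sub _ _
        _ = t + |β| := by rw [abs_of_pos h0]
        _ ≤ (1 + |β|) * t := by nlinarith [abs_nonneg β]
  | more n ih1 ih2 =>
      obtain ⟨C1, hC1, h1⟩ := ih1
      obtain ⟨C2, hC2, h2⟩ := ih2
      refine ⟨(1 + |2 * ((n : ℝ) + 1) + β|) * C2 + |(n : ℝ) + β| * C1,
        by positivity, fun t ht => ?_⟩
      have h0 : (0:ℝ) < t := lt_of_lt_of_le one_pos ht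
      have hp1 := h1 t ht
      have hp2 := h2 t ht
      have hpow1 : t ^ n ≤ t ^ (n + 2) := pow_le_pow_right₀ ht (by omega)
      have hpow2 : t ^ (n + 1) ≤ t ^ (n + 2) := pow_le_pow_right₀ ht (by omega)
      have hps : t ^ (n + 2) = t ^ (n + 1) * t := pow_succ t (n + 1)
      have e1 : |lagP β (n + 2) t| ≤ ((n : ℝ) + 2) * |lagP β (n + 2) t| :=
        le_mul_of_one_le_left (abs_nonneg _) (by have h := Nat.cast_nonneg (α := ℝ) n; linarith)
      have e2 : ((n : ℝ) + 2) * |lagP β (n + 2) t|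
          = |(t - (2 * ((n : ℝ) + 1) + β)) * lagP β (n + 1) t
              - ((n : ℝ) + β) * lagP β n t| := by
        rw [← abs_of_pos (show (0:ℝ) < (n : ℝ) + 2 by positivity), ← abs_mul, lagP_rec]
      calc |lagP β (n + 2) t|
          ≤ |(t - (2 * ((n : ℝ) + 1) + β)) * lagP β (n + 1) t
              - ((n : ℝ) + β) * lagP β n t| := e1.trans_eq e2
        _ ≤ |t - (2 * ((n : ℝ) + 1) + β)| * |lagP β (n + 1) t|
              + |(n : ℝ) + β| * |lagP β n t| := by
            refine (abs_sub _ _).trans ?_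
            rw [abs_mul, abs_mul]
        _ ≤ (t + |2 * ((n : ℝ) + 1) + β|) * (C2 * t ^ (n + 1))
              + |(n : ℝ) + β| * (C1 * t ^ n) := by
            gcongr
            calc |t - (2 * ((n : ℝ) + 1) + β)| ≤ |t| + |2 * ((n : ℝ) + 1) + β| :=
                abs_sub _ _
              _ = t + _ := by rw [abs_of_pos h0]
        _ ≤ ((1 + |2 * ((n : ℝ) + 1) + β|) * C2 + |(n : ℝ) + β| * C1) * t ^ (n + 2) := by
            nlinarith [mul_le_mul_of_nonneg_left hpow2
                (mul_nonneg (abs_nonneg (2 * ((n : ℝ) + 1) + β)) hC2.le),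
              mul_le_mul_of_nonneg_left hpow1
                (mul_nonneg (abs_nonneg ((n : ℝ) + β)) hC1.le),
              mul_le_mul_of_nonneg_left hpow1 hC1.le,
              mul_le_mul_of_nonneg_left hpow2 hC2.le,
              pow_nonneg h0.le (n + 1), pow_nonneg h0.le n]

/-- Forward shift, analytic form. -/
lemma shift_hasDerivAt (β : ℝ) (x : ℕ) {t : ℝ} (ht : 0 < t) :
    HasDerivAt (fun s : ℝ =>
        -(if x = 0 then 0 else lagP (β + 1) (x - 1) s) * s ^ β * Real.exp (-s))
      ((x : ℝ) * lagP β x t * t ^ (β - 1) * Real.exp (-t)) t := by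
  cases x with
  | zero =>
      simp only [if_pos rfl, neg_zero, zero_mul, Nat.cast_zero]
      simpa using hasDerivAt_const t (0 : ℝ)
  | succ m =>
      simp only [Nat.succ_ne_zero, if_neg, ite_false, Nat.add_sub_cancel]
      have hL := (lagP_hasDerivAt (β + 1) m t).neg
      have hpow : HasDerivAt (fun s : ℝ => s ^ β) (β * t ^ (β - 1)) t :=
        Real.hasDerivAt_rpow_const (Or.inl ht.ne')
      have hexp : HasDerivAt (fun s : ℝ => Real.exp (-s)) (-Real.exp (-t)) t := by
        simpa [Function.comp_def] using (Real.hasDerivAt_exp (-t)).comp t ((hasDerivAt_id t).neg)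
      have hD := (hL.mul hpow).mul hexp
      refine hD.congr_deriv (Eq.symm ?_)
      simp only [Pi.mul_apply, Pi.neg_apply]
      have e2 : β + 1 + 1 = β + 2 := by ring
      rw [e2]
      have htpow : t ^ β = t ^ (β - 1) * t := by
        rw [← Real.rpow_add_one ht.ne' (β - 1)]
        norm_num
      rw [htpow]
      push_cast
      linear_combination (t ^ (β - 1) * Real.exp (-t)) * lagD β m t

lemma contA (β : ℝ) (x : ℕ) :
    Continuous (fun s : ℝ => (if x = 0 then 0 else lagP (β + 1) (x - 1) s)) := by
  split
  · exact continuous_const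
  · exact lagP_continuous _ _

/-- Derivative of the bilinear combination `G`. -/
lemma G_hasDerivAt (β : ℝ) (x y : ℕ) {t : ℝ} (ht : 0 < t) :
    HasDerivAt (fun s : ℝ => s ^ β * Real.exp (-s) *
        ((if x = 0 then 0 else lagP (β + 1) (x - 1) s) * lagP β y s
          - lagP β x s * (if y = 0 then 0 else lagP (β + 1) (y - 1) s)))
      (((y : ℝ) - x) * (lagP β x t * lagP β y t * t ^ (β - 1) * Real.exp (-t))) t := by
  have h := ((shift_hasDerivAt β y ht).mul (lagP_hasDerivAt β x t)).sub
    ((shift_hasDerivAt β x ht).mul (lagP_hasDerivAt β y t))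
  have hfun : (fun s : ℝ => s ^ β * Real.exp (-s) *
        ((if x = 0 then 0 else lagP (β + 1) (x - 1) s) * lagP β y s
          - lagP β x s * (if y = 0 then 0 else lagP (β + 1) (y - 1) s)))
      = (fun s : ℝ =>
          (-(if y = 0 then 0 else lagP (β + 1) (y - 1) s) * s ^ β * Real.exp (-s))
            * lagP β x s
          - (-(if x = 0 then 0 else lagP (β + 1) (x - 1) s) * s ^ β * Real.exp (-s))
            * lagP β y s) := by
    funext s; ring
  rw [hfun]
  refine h.congr_deriv (Eq.symm ?_)
  ring

/-- `G` tends to `0` at infinity. -/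
lemma G_tendsto (β : ℝ) (x y : ℕ) :
    Tendsto (fun s : ℝ => s ^ β * Real.exp (-s) *
        ((if x = 0 then 0 else lagP (β + 1) (x - 1) s) * lagP β y s
          - lagP β x s * (if y = 0 then 0 else lagP (β + 1) (y - 1) s)))
      atTop (𝓝 0) := by
  obtain ⟨CA, hCA, hA⟩ := lagP_bound (β + 1) (x - 1)
  obtain ⟨CB, hCB, hB⟩ := lagP_bound (β + 1) (y - 1)
  obtain ⟨CX, hCX, hX⟩ := lagP_bound β x
  obtain ⟨CY, hCY, hY⟩ := lagP_bound β y
  set C : ℝ := CA * CY + CX * CB with hC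
  have key : ∀ s : ℝ, 1 ≤ s →
      ‖s ^ β * Real.exp (-s) *
        ((if x = 0 then 0 else lagP (β + 1) (x - 1) s) * lagP β y s
          - lagP β x s * (if y = 0 then 0 else lagP (β + 1) (y - 1) s))‖
      ≤ C * (s ^ (β + ((x + y : ℕ) : ℝ)) * Real.exp (-1 * s)) := by
    intro s hs
    have hs0 : (0:ℝ) < s := lt_of_lt_of_le one_pos hs
    have hAb : |(if x = 0 then 0 else lagP (β + 1) (x - 1) s)| ≤ CA * s ^ (x - 1) := by
      split
      · simpa using (mul_nonneg hCA.le (pow_nonneg hs0.le _))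
      · exact hA s hs
    have hBb : |(if y = 0 then 0 else lagP (β + 1) (y - 1) s)| ≤ CB * s ^ (y - 1) := by
      split
      · simpa using (mul_nonneg hCB.le (pow_nonneg hs0.le _))
      · exact hB s hs
    have hprod : |(if x = 0 then 0 else lagP (β + 1) (x - 1) s) * lagP β y s
          - lagP β x s * (if y = 0 then 0 else lagP (β + 1) (y - 1) s)|
        ≤ C * s ^ (x + y) := by
      have e1 : CA * s ^ (x - 1) * (CY * s ^ y) ≤ CA * CY * s ^ (x + y) := by
        have h := pow_le_pow_right₀ hs (show x - 1 + y ≤ x + y by omega)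
        have h2 := mul_le_mul_of_nonneg_left h (show (0:ℝ) ≤ CA * CY by positivity)
        calc CA * s ^ (x - 1) * (CY * s ^ y) = CA * CY * s ^ (x - 1 + y) := by
              rw [pow_add]; ring
          _ ≤ CA * CY * s ^ (x + y) := h2
      have e2 : CX * s ^ x * (CB * s ^ (y - 1)) ≤ CX * CB * s ^ (x + y) := by
        have h := pow_le_pow_right₀ hs (show x + (y - 1) ≤ x + y by omega)
        have h2 := mul_le_mul_of_nonneg_left h (show (0:ℝ) ≤ CX * CB by positivity)
        calc CX * s ^ x * (CB * s ^ (y - 1)) = CX * CB * s ^ (x + (y - 1)) := by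
              rw [pow_add]; ring
          _ ≤ CX * CB * s ^ (x + y) := h2
      calc |(if x = 0 then 0 else lagP (β + 1) (x - 1) s) * lagP β y s
          - lagP β x s * (if y = 0 then 0 else lagP (β + 1) (y - 1) s)|
          ≤ |(if x = 0 then 0 else lagP (β + 1) (x - 1) s)| * |lagP β y s|
            + |lagP β x s| * |(if y = 0 then 0 else lagP (β + 1) (y - 1) s)| := by
            refine (abs_sub _ _).trans ?_
            rw [abs_mul, abs_mul]
        _ ≤ (CA * s ^ (x - 1)) * (CY * s ^ y) + (CX * s ^ x) * (CB * s ^ (y - 1)) := by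
            have g1 := mul_le_mul hAb (hY s hs) (abs_nonneg _) (by positivity)
            have g2 := mul_le_mul (hX s hs) hBb (abs_nonneg _) (by positivity)
            linarith
        _ ≤ C * s ^ (x + y) := by rw [hC]; linarith [e1, e2]
    have hpow : s ^ β * s ^ (x + y) = s ^ (β + ((x + y : ℕ) : ℝ)) := by
      rw [← Real.rpow_natCast s (x + y), ← Real.rpow_add hs0]
    calc ‖s ^ β * Real.exp (-s) *
        ((if x = 0 then 0 else lagP (β + 1) (x - 1) s) * lagP β y s
          - lagP β x s * (if y = 0 then 0 else lagP (β + 1) (y - 1) s))‖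
        = s ^ β * Real.exp (-s) * |(if x = 0 then 0 else lagP (β + 1) (x - 1) s) * lagP β y s
          - lagP β x s * (if y = 0 then 0 else lagP (β + 1) (y - 1) s)| := by
          rw [norm_mul, norm_mul, Real.norm_eq_abs, Real.norm_eq_abs, Real.norm_eq_abs,
            abs_of_pos (Real.rpow_pos_of_pos hs0 β), abs_of_pos (Real.exp_pos _)]
      _ ≤ s ^ β * Real.exp (-s) * (C * s ^ (x + y)) := by
          gcongr
      _ = C * (s ^ β * s ^ (x + y) * Real.exp (-1 * s)) := by rw [neg_one_mul]; ring
      _ = C * (s ^ (β + ((x + y : ℕ) : ℝ)) * Real.exp (-1 * s)) := by rw [hpow]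
  have hlim : Tendsto (fun s : ℝ => C * (s ^ (β + ((x + y : ℕ) : ℝ)) * Real.exp (-1 * s)))
      atTop (𝓝 0) := by
    have := (tendsto_rpow_mul_exp_neg_mul_atTop_nhds_zero (β + ((x + y : ℕ) : ℝ)) 1
      one_pos).const_mul C
    simpa using this
  refine squeeze_zero_norm' ?_ hlim
  filter_upwards [eventually_ge_atTop (1:ℝ)] with s hs using key s hs

/-- Integrability of the weighted product on the tail. -/
lemma integrableOn_tail (β : ℝ) (hβ : 0 < β) (x y : ℕ) (r : ℝ) (hr : 0 < r) :
    IntegrableOn (fun t : ℝ => lagP β x t * lagP β y t * t ^ (β - 1) * Real.exp (-t))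
      (Ioi r) := by
  obtain ⟨CX, hCX, hX⟩ := lagP_bound β x
  obtain ⟨CY, hCY, hY⟩ := lagP_bound β y
  have hcontOn : ∀ (S : Set ℝ), (∀ t ∈ S, 0 < t) → ContinuousOn
      (fun t : ℝ => lagP β x t * lagP β y t * t ^ (β - 1) * Real.exp (-t)) S := by
    intro S hS t htS
    have ht : 0 < t := hS t htS
    exact (((((lagP_continuous β x).continuousAt).mul
      ((lagP_continuous β y).continuousAt)).mul
      (Real.continuousAt_rpow_const t (β - 1) (Or.inl ht.ne'))).mul
      ((Real.continuous_exp.comp continuous_neg).continuousAt)).continuousWithinAt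
  set M : ℝ := max r 1 with hM
  have hrM : r ≤ M := le_max_left _ _
  have hM1 : (1:ℝ) ≤ M := le_max_right _ _
  have hM0 : (0:ℝ) < M := lt_of_lt_of_le one_pos hM1
  rw [← Ioc_union_Ioi_eq_Ioi hrM, integrableOn_union]
  constructor
  · exact ((hcontOn (Icc r M) (fun t ht => lt_of_lt_of_le hr ht.1)).integrableOn_Icc).mono_set
      Ioc_subset_Icc_self
  · have hg : IntegrableOn
        (fun t : ℝ => (CX * CY) * (Real.exp (-t) * t ^ ((β + ((x + y : ℕ) : ℝ)) - 1)))
        (Ioi M) := by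
      refine ((Real.GammaIntegral_convergent
        (show (0:ℝ) < β + ((x + y : ℕ) : ℝ) by positivity)).mono_set
        (Ioi_subset_Ioi hM0.le)).const_mul _
    refine Integrable.mono' hg
      ((hcontOn (Ioi M) (fun t ht => lt_trans hM0 ht)).aestronglyMeasurable measurableSet_Ioi)
      ?_
    rw [ae_restrict_iff' measurableSet_Ioi]
    filter_upwards with t ht
    have ht1 : (1:ℝ) ≤ t := le_of_lt (lt_of_le_of_lt hM1 ht)
    have ht0 : (0:ℝ) < t := lt_of_lt_of_le one_pos ht1
    have hpow : t ^ (x + y) * t ^ (β - 1) = t ^ ((β + ((x + y : ℕ) : ℝ)) - 1) := by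
      rw [← Real.rpow_natCast t (x + y), ← Real.rpow_add ht0]
      ring_nf
    calc ‖lagP β x t * lagP β y t * t ^ (β - 1) * Real.exp (-t)‖
        = |lagP β x t| * |lagP β y t| * t ^ (β - 1) * Real.exp (-t) := by
          rw [Real.norm_eq_abs, abs_mul, abs_mul, abs_mul,
            abs_of_pos (Real.rpow_pos_of_pos ht0 _), abs_of_pos (Real.exp_pos _)]
      _ ≤ (CX * t ^ x) * (CY * t ^ y) * t ^ (β - 1) * Real.exp (-t) := by
          gcongr
          · exact hX t ht1
          · exact hY t ht1
      _ = (CX * CY) * (Real.exp (-t) * (t ^ (x + y) * t ^ (β - 1))) := by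
          rw [pow_add]; ring
      _ = (CX * CY) * (Real.exp (-t) * t ^ ((β + ((x + y : ℕ) : ℝ)) - 1)) := by rw [hpow]

/-- For `x ≠ y` and `r > 0`,
`∫_r^∞ L_x^{(β)} L_y^{(β)} t^{β−1}e^{−t} dt
  = r^β e^{−r} (L_{x−1}^{(β+1)}(r) L_y^{(β)}(r) − L_x^{(β)}(r) L_{y−1}^{(β+1)}(r))/(x−y)`,
with the convention `L_{−1}^{(β+1)} = 0`. -/
theorem laguerre_tail_integral (β : ℝ) (hβ : 0 < β) (x y : ℕ) (hxy : x ≠ y)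
    (r : ℝ) (hr : 0 < r) :
    ∫ t in Set.Ioi r, lagP β x t * lagP β y t * t ^ (β - 1) * Real.exp (-t)
      = r ^ β * Real.exp (-r) *
          (((if x = 0 then 0 else lagP (β + 1) (x - 1) r) * lagP β y r
            - lagP β x r * (if y = 0 then 0 else lagP (β + 1) (y - 1) r))
            / ((x : ℝ) - y)) := by
  have hxy' : (x : ℝ) ≠ (y : ℝ) := by exact_mod_cast hxy
  have hyx : ((y : ℝ) - x) ≠ 0 := sub_ne_zero_of_ne (Ne.symm hxy')
  set G : ℝ → ℝ := fun s => s ^ β * Real.exp (-s) *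
      ((if x = 0 then 0 else lagP (β + 1) (x - 1) s) * lagP β y s
        - lagP β x s * (if y = 0 then 0 else lagP (β + 1) (y - 1) s)) with hG
  have hGcont : ContinuousAt G r := by
    refine ContinuousAt.mul (ContinuousAt.mul ?_ ?_) ?_
    · exact Real.continuousAt_rpow_const r β (Or.inl hr.ne')
    · exact (Real.continuous_exp.comp continuous_neg).continuousAt
    · exact (((contA β x).continuousAt.mul (lagP_continuous β y).continuousAt).sub
        ((lagP_continuous β x).continuousAt.mul (contA β y).continuousAt))
  have hderiv : ∀ s ∈ Ioi r, HasDerivAt (fun s => ((y : ℝ) - x)⁻¹ * G s)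
      (lagP β x s * lagP β y s * s ^ (β - 1) * Real.exp (-s)) s := by
    intro s hs
    have h := (G_hasDerivAt β x y (lt_trans hr hs)).const_mul (((y : ℝ) - x)⁻¹)
    refine h.congr_deriv (Eq.symm ?_)
    field_simp
  have htend : Tendsto (fun s => ((y : ℝ) - x)⁻¹ * G s) atTop (𝓝 0) := by
    have h := (G_tendsto β x y).const_mul (((y : ℝ) - x)⁻¹)
    rw [mul_zero] at h
    exact h
  have hFTC := integral_Ioi_of_hasDerivAt_of_tendsto
    (continuousAt_const.mul hGcont).continuousWithinAt hderiv
    (integrableOn_tail β hβ x y r hr) htend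
  rw [hFTC, hG]
  have hxy2 : (x : ℝ) - y ≠ 0 := sub_ne_zero_of_ne hxy'
  simp only [Pi.mul_apply]
  field_simp
  ring
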